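/- For all positive integers r and k, define graphs G_{r,k} recursively: G_{r,1} is a single vertex, G_{1,k} is the complete graph K_k, and for r,k ≥ 2, G_{r,k} is obtained from G_{r-1,k} by attaching to each vertex v of G_{r-1,k} a disjoint copy of G_{r,k-1} fully joined to v. Then td(G_{r,k}) ≥ C(r+k-1, r). -/

import Mathlib

open Classical

variable {V : Type}

/-- Reachability within a vertex subset `s` of the graph `G`. -/
def ReachIn (G : SimpleGraph V) (s : Finset V) (u v : V) : Prop :=
  Relation.ReflTransGen (fun a b => a ∈ s ∧ b ∈ s ∧ G.Adj a b) u v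

/-- The induced subgraph of `G` on `s` is (nonempty and) connected. -/
def ConnIn (G : SimpleGraph V) (s : Finset V) : Prop :=
  s.Nonempty ∧ ∀ u ∈ s, ∀ v ∈ s, ReachIn G s u v

/-- The vertex set of the connected component of `v` in the induced subgraph on `s`. -/
noncomputable def compIn (G : SimpleGraph V) (s : Finset V) (v : V) : Finset V :=
  s.filter (fun u => ReachIn G s v u)

/-- Fuel-based recursion computing the treedepth of the induced subgraph of `G` on `s`
(correct whenever the fuel is at least `s.card`): treedepth of the null graph is `0`;
for a connected graph it is `1 + min_v td(G - v)`; otherwise the max over components. -/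
noncomputable def tdAux (G : SimpleGraph V) : ℕ → Finset V → ℕ
  | 0, _ => 0
  | n+1, s =>
    if hs : s = ∅ then 0
    else if ConnIn G s then
      1 + s.inf' (Finset.nonempty_of_ne_empty hs) (fun v => tdAux G n (s.erase v))
    else
      s.sup (fun v => tdAux G n (compIn G s v))

/-- The treedepth of the induced subgraph of `G` on the vertex set `s`. -/
noncomputable def tdOn (G : SimpleGraph V) (s : Finset V) : ℕ := tdAux G s.card s

/-- The treedepth of a finite graph. -/
noncomputable def td (G : SimpleGraph V) [Fintype V] : ℕ := tdOn G Finset.univ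

/-- The graph of type `a(H, H')`: obtained from `H` by adding, for each vertex
`a` of `H`, a disjoint copy `{a} × B` of `H'` fully joined to `a`. -/
def typeA {A B : Type} (H : SimpleGraph A) (H' : SimpleGraph B) :
    SimpleGraph (A ⊕ A × B) where
  Adj x y := match x, y with
    | Sum.inl a, Sum.inl a' => H.Adj a a'
    | Sum.inl a, Sum.inr p => a = p.1
    | Sum.inr p, Sum.inl a => p.1 = a
    | Sum.inr p, Sum.inr q => p.1 = q.1 ∧ H'.Adj p.2 q.2
  symm := ⟨by
    rintro (a|p) (a'|q) h
    · exact H.adj_symm h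
    · exact h.symm
    · exact h.symm
    · exact ⟨h.1.symm, H'.adj_symm h.2⟩⟩
  loopless := ⟨by
    rintro (a|p) h
    · exact H.ne_of_adj h rfl
    · exact H'.ne_of_adj h.2 rfl⟩

/-- One row-step of the recursive construction: given the previous family
`prev k = G_{r, k+1}`, builds `G_{r+1, k+1}` for all `k` (index shifted by one:
`GrkRow prev 0` is the one-vertex graph `G_{r+1, 1}`, and `GrkRow prev (k+1)`
is obtained from `prev (k+1) = G_{r, k+2}` by attaching to each of its vertices
a fully-joined disjoint copy of `GrkRow prev k = G_{r+1, k+1}`). -/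
def GrkRow (prev : ℕ → (W : Type) × SimpleGraph W) : ℕ → (W : Type) × SimpleGraph W
  | 0 => ⟨PUnit, ⊥⟩
  | k+1 => ⟨(prev (k+1)).1 ⊕ ((prev (k+1)).1 × (GrkRow prev k).1),
      typeA (prev (k+1)).2 (GrkRow prev k).2⟩

/-- The graph `G_{r+1, k+1}` (indices shifted by one): `GrkS 0 k` is the complete
graph `K_{k+1}`, `GrkS (r+1) 0` is a single vertex, and `GrkS (r+1) (k+1)` is
obtained from `GrkS r (k+1)` by attaching to each vertex a fully-joined disjoint
copy of `GrkS (r+1) k`. -/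
def GrkS : ℕ → ℕ → (W : Type) × SimpleGraph W
  | 0 => fun k => ⟨Fin (k+1), ⊤⟩
  | r+1 => GrkRow (GrkS r)

noncomputable def fintypeRow (prev : ℕ → (W : Type) × SimpleGraph W)
    (hp : ∀ k, Fintype (prev k).1) : ∀ k, Fintype (GrkRow prev k).1
  | 0 => inferInstanceAs (Fintype PUnit)
  | k+1 =>
    letI := hp (k+1)
    letI := fintypeRow prev hp k
    inferInstanceAs (Fintype (_ ⊕ _ × _))

noncomputable def fintypeGrk : ∀ r k, Fintype (GrkS r k).1
  | 0 => fun k => inferInstanceAs (Fintype (Fin (k+1)))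
  | r+1 => fintypeRow (GrkS r) (fintypeGrk r)


-- basic lemmas
lemma ReachIn.mono {G : SimpleGraph V} {s s' : Finset V} (hss : s ⊆ s') {u v : V}
    (h : ReachIn G s u v) : ReachIn G s' u v := by
  refine Relation.ReflTransGen.mono ?_ _ _ h
  rintro a b ⟨ha, hb, hab⟩
  exact ⟨hss ha, hss hb, hab⟩

lemma ReachIn.symm {G : SimpleGraph V} {s : Finset V} {u v : V}
    (h : ReachIn G s u v) : ReachIn G s v u := by
  have hsym : Symmetric (fun a b => a ∈ s ∧ b ∈ s ∧ G.Adj a b) := by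
    rintro a b ⟨ha, hb, hab⟩; exact ⟨hb, ha, hab.symm⟩
  haveI : Std.Symm (fun a b => a ∈ s ∧ b ∈ s ∧ G.Adj a b) := ⟨hsym⟩
  exact (Relation.ReflTransGen.stdSymm (r := fun a b => a ∈ s ∧ b ∈ s ∧ G.Adj a b)).symm _ _ h

lemma compIn_subset {G : SimpleGraph V} {s : Finset V} {v : V} :
    compIn G s v ⊆ s := Finset.filter_subset _ _

lemma mem_compIn {G : SimpleGraph V} {s : Finset V} {v u : V} :
    u ∈ compIn G s v ↔ u ∈ s ∧ ReachIn G s v u := Finset.mem_filter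

lemma compIn_ne_of_not_conn {G : SimpleGraph V} {s : Finset V} (hs : ¬ ConnIn G s)
    (hne : s.Nonempty) {v : V} (hv : v ∈ s) : compIn G s v ≠ s := by
  intro h
  refine hs ⟨hne, fun x hx y hy => ?_⟩
  have hxr : ReachIn G s v x := (mem_compIn.1 (by rw [h]; exact hx)).2
  have hyr : ReachIn G s v y := (mem_compIn.1 (by rw [h]; exact hy)).2
  exact hxr.symm.trans hyr

lemma compIn_card_lt {G : SimpleGraph V} {s : Finset V} (hs : ¬ ConnIn G s)
    (hne : s.Nonempty) {v : V} (hv : v ∈ s) : (compIn G s v).card < s.card :=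
  Finset.card_lt_card (lt_of_le_of_ne compIn_subset (compIn_ne_of_not_conn hs hne hv))

/-- Fuel irrelevance. -/
lemma tdAux_eq_tdOn {G : SimpleGraph V} : ∀ (n : ℕ) {s : Finset V},
    s.card ≤ n → tdAux G n s = tdOn G s := by
  intro n
  induction n using Nat.strong_induction_on with
  | _ n ih =>
    match n with
    | 0 =>
      intro s hs; rw [Nat.le_zero, Finset.card_eq_zero] at hs
      subst hs; rfl
    | n+1 =>
      intro s hs
      by_cases hse : s = ∅
      · subst hse; simp [tdAux, tdOn]
      · have hne : s.Nonempty := Finset.nonempty_of_ne_empty hse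
        obtain ⟨c, hc⟩ : ∃ c, s.card = c + 1 :=
          ⟨s.card - 1, (Nat.succ_pred_eq_of_pos (Finset.card_pos.2 hne)).symm⟩
        have hcn : c ≤ n := by omega
        rw [tdOn, hc]
        by_cases hconn : ConnIn G s
        · rw [tdAux, tdAux, dif_neg hse, dif_neg hse, if_pos hconn, if_pos hconn]
          congr 1
          refine Finset.inf'_congr _ rfl (fun v hv => ?_)
          have hce := Finset.card_erase_of_mem hv
          rw [ih n (by omega) (by omega), ih c (by omega) (by omega)]
        · rw [tdAux, tdAux, dif_neg hse, dif_neg hse, if_neg hconn, if_neg hconn]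
          refine Finset.sup_congr rfl (fun v hv => ?_)
          have hlt := compIn_card_lt hconn hne hv
          rw [ih n (by omega) (by omega), ih c (by omega) (by omega)]

lemma tdOn_conn {G : SimpleGraph V} {s : Finset V} (hconn : ConnIn G s) :
    tdOn G s = 1 + s.inf' hconn.1 (fun v => tdOn G (s.erase v)) := by
  have hne : s ≠ ∅ := Finset.nonempty_iff_ne_empty.1 hconn.1
  obtain ⟨c, hc⟩ : ∃ c, s.card = c + 1 :=
    ⟨s.card - 1, (Nat.succ_pred_eq_of_pos (Finset.card_pos.2 hconn.1)).symm⟩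
  rw [tdOn, hc, tdAux, dif_neg hne, if_pos hconn]
  congr 1
  refine Finset.inf'_congr _ rfl (fun v hv => ?_)
  have h2 : (s.erase v).card ≤ c := by
    have := Finset.card_erase_of_mem hv; omega
  exact tdAux_eq_tdOn _ h2

lemma tdOn_not_conn {G : SimpleGraph V} {s : Finset V} (hne : s.Nonempty)
    (hconn : ¬ ConnIn G s) :
    tdOn G s = s.sup (fun v => tdOn G (compIn G s v)) := by
  have hse : s ≠ ∅ := Finset.nonempty_iff_ne_empty.1 hne
  obtain ⟨c, hc⟩ : ∃ c, s.card = c + 1 :=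
    ⟨s.card - 1, (Nat.succ_pred_eq_of_pos (Finset.card_pos.2 hne)).symm⟩
  rw [tdOn, hc, tdAux, dif_neg hse, if_neg hconn]
  refine Finset.sup_congr rfl (fun v hv => ?_)
  have hlt := compIn_card_lt hconn hne hv
  exact tdAux_eq_tdOn _ (by omega)

def Hard (G : SimpleGraph V) : ℕ → Finset V → Prop
  | 0, s => ConnIn G s
  | d+1, s => ConnIn G s ∧ ∀ v ∈ s, ∃ t, t ⊆ s.erase v ∧ Hard G d t

lemma Hard.connIn {G : SimpleGraph V} {d : ℕ} {s : Finset V} (h : Hard G d s) :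
    ConnIn G s := by
  cases d with
  | zero => exact h
  | succ d => exact h.1

lemma hard_le_tdOn {G : SimpleGraph V} : ∀ {u : Finset V} {d : ℕ} {s : Finset V},
    Hard G d s → s ⊆ u → d + 1 ≤ tdOn G u := by
  intro u
  induction u using Finset.strongInduction with
  | _ u ih =>
    intro d s hd hsu
    have hsne : s.Nonempty := hd.connIn.1
    have hune : u.Nonempty := hsne.mono hsu
    by_cases hconn : ConnIn G u
    · rw [tdOn_conn hconn]
      have key : ∀ v ∈ u, d ≤ tdOn G (u.erase v) := by
        intro v hv
        by_cases hvs : v ∈ s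
        · cases d with
          | zero => exact Nat.zero_le _
          | succ e =>
            obtain ⟨t, hts, ht⟩ := hd.2 v hvs
            have htu : t ⊆ u.erase v :=
              hts.trans (Finset.erase_subset_erase v hsu)
            have := ih (u.erase v) (Finset.erase_ssubset hv) ht htu
            omega
        · have hs' : s ⊆ u.erase v := fun x hx =>
            Finset.mem_erase.2 ⟨fun h => hvs (h ▸ hx), hsu hx⟩
          have := ih (u.erase v) (Finset.erase_ssubset hv) hd hs'
          omega
      have : d ≤ u.inf' hune (fun v => tdOn G (u.erase v)) :=
        Finset.le_inf' _ _ key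
      omega
    · rw [tdOn_not_conn hune hconn]
      obtain ⟨w, hw⟩ := hsne
      have hscomp : s ⊆ compIn G u w := by
        intro x hx
        exact mem_compIn.2 ⟨hsu hx, (hd.connIn.2 w hw x hx).mono hsu⟩
      have hss : compIn G u w ⊂ u :=
        lt_of_le_of_ne compIn_subset (compIn_ne_of_not_conn hconn hune (hsu hw))
      have := ih _ hss hd hscomp
      exact this.trans (Finset.le_sup (f := fun v => tdOn G (compIn G u v)) (hsu hw))

lemma hard_le_td {G : SimpleGraph V} [Fintype V] {d : ℕ} {s : Finset V}
    (h : Hard G d s) : d + 1 ≤ td G :=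
  hard_le_tdOn h (Finset.subset_univ s)

/-- Transport of hardness along an adjacency-preserving injection. -/
lemma Hard.map {W : Type} [DecidableEq W] {G : SimpleGraph V} {G' : SimpleGraph W} {f : V → W}
    (hinj : Function.Injective f)
    (hadj : ∀ a b, G.Adj a b → G'.Adj (f a) (f b)) :
    ∀ {d : ℕ} {s : Finset V}, Hard G d s → Hard G' d (s.image f) := by
  have hreach : ∀ (s : Finset V) (u v : V), ReachIn G s u v →
      ReachIn G' (s.image f) (f u) (f v) := by
    intro s u v h
    refine Relation.ReflTransGen.lift f ?_ _ _ h
    rintro a b ⟨ha, hb, hab⟩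
    exact ⟨Finset.mem_image_of_mem f ha, Finset.mem_image_of_mem f hb, hadj _ _ hab⟩
  have hconn : ∀ (s : Finset V), ConnIn G s → ConnIn G' (s.image f) := by
    rintro s ⟨hne, h⟩
    refine ⟨hne.image f, ?_⟩
    intro x hx y hy
    obtain ⟨a, ha, rfl⟩ := Finset.mem_image.1 hx
    obtain ⟨b, hb, rfl⟩ := Finset.mem_image.1 hy
    exact hreach s a b (h a ha b hb)
  intro d
  induction d with
  | zero => intro s h; exact hconn s h
  | succ d ih =>
    intro s h
    refine ⟨hconn s h.1, ?_⟩
    intro w hw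
    obtain ⟨v, hv, rfl⟩ := Finset.mem_image.1 hw
    obtain ⟨t, hts, ht⟩ := h.2 v hv
    refine ⟨t.image f, fun x hx => ?_, ih ht⟩
    obtain ⟨a, hat, rfl⟩ := Finset.mem_image.1 hx
    have hat' := hts hat
    simp only [Finset.mem_erase] at hat' ⊢
    exact ⟨fun h => hat'.1 (hinj h), Finset.mem_image_of_mem f hat'.2⟩

/-- Hardness for complete graphs. -/
lemma hard_top {n : ℕ} : ∀ (d : ℕ) (s : Finset (Fin n)), d + 1 ≤ s.card →
    Hard (⊤ : SimpleGraph (Fin n)) d s := by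
  have hconn : ∀ s : Finset (Fin n), s.Nonempty → ConnIn (⊤ : SimpleGraph (Fin n)) s := by
    intro s hne
    refine ⟨hne, fun u hu v hv => ?_⟩
    rcases eq_or_ne u v with rfl | huv
    · exact Relation.ReflTransGen.refl
    · exact Relation.ReflTransGen.single ⟨hu, hv, huv⟩
  intro d
  induction d with
  | zero =>
    intro s hs
    exact hconn s (Finset.card_pos.1 (by omega))
  | succ d ih =>
    intro s hs
    refine ⟨hconn s (Finset.card_pos.1 (by omega)), fun v hv => ?_⟩
    refine ⟨s.erase v, fun x hx => by simpa using hx, ih _ ?_⟩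
    rw [Finset.card_erase_of_mem hv]; omega

section TypeA

variable {A B : Type} [DecidableEq (A ⊕ A × B)] {H : SimpleGraph A} {H' : SimpleGraph B}

lemma hard_zero {G : SimpleGraph V} {s : Finset V} : Hard G 0 s ↔ ConnIn G s := Iff.rfl

lemma hard_succ {G : SimpleGraph V} {d : ℕ} {s : Finset V} :
    Hard G (d+1) s ↔ ConnIn G s ∧ ∀ v ∈ s, ∃ t, t ⊆ s.erase v ∧ Hard G d t := Iff.rfl

def padSet [DecidableEq (A ⊕ A × B)] (s : Finset A) (t : Finset B) : Finset (A ⊕ A × B) :=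
  s.image Sum.inl ∪ (s ×ˢ t).image Sum.inr

lemma inl_mem_padSet {s : Finset A} {t : Finset B} {a : A} (ha : a ∈ s) :
    Sum.inl a ∈ padSet s t :=
  Finset.mem_union_left _ (Finset.mem_image_of_mem _ ha)

lemma inr_mem_padSet {s : Finset A} {t : Finset B} {a : A} {b : B} (ha : a ∈ s) (hb : b ∈ t) :
    (Sum.inr (a, b) : A ⊕ A × B) ∈ padSet s t :=
  Finset.mem_union_right _ (Finset.mem_image_of_mem _ (Finset.mk_mem_product ha hb))

lemma mem_padSet_inl {s : Finset A} {t : Finset B} {a : A}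
    (h : Sum.inl a ∈ padSet s t) : a ∈ s := by
  rcases Finset.mem_union.1 h with h | h
  · obtain ⟨a', ha', he⟩ := Finset.mem_image.1 h
    cases he; exact ha'
  · obtain ⟨p, _, he⟩ := Finset.mem_image.1 h
    cases he

lemma mem_padSet_inr {s : Finset A} {t : Finset B} {a : A} {b : B}
    (h : (Sum.inr (a, b) : A ⊕ A × B) ∈ padSet s t) : a ∈ s ∧ b ∈ t := by
  rcases Finset.mem_union.1 h with h | h
  · obtain ⟨a', _, he⟩ := Finset.mem_image.1 h
    cases he
  · obtain ⟨p, hp, he⟩ := Finset.mem_image.1 h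
    cases he
    exact Finset.mem_product.1 hp

lemma reach_inl_padSet {s : Finset A} {t : Finset B} {a a' : A}
    (h : ReachIn H s a a') : ReachIn (typeA H H') (padSet s t) (Sum.inl a) (Sum.inl a') := by
  refine Relation.ReflTransGen.lift Sum.inl ?_ _ _ h
  rintro x y ⟨hx, hy, hxy⟩
  exact ⟨inl_mem_padSet hx, inl_mem_padSet hy, hxy⟩

lemma connIn_padSet {s : Finset A} {t : Finset B} (hs : ConnIn H s) :
    ConnIn (typeA H H') (padSet s t) := by
  obtain ⟨a₀, ha₀⟩ := hs.1
  have base : ∀ x ∈ padSet s t, ∃ a, a ∈ s ∧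
      ReachIn (typeA H H') (padSet s t) x (Sum.inl a) := by
    rintro (a | ⟨a, b⟩) hx
    · exact ⟨a, mem_padSet_inl hx, Relation.ReflTransGen.refl⟩
    · have hab := mem_padSet_inr hx
      exact ⟨a, hab.1, Relation.ReflTransGen.single
        ⟨hx, inl_mem_padSet hab.1, rfl⟩⟩
  refine ⟨⟨Sum.inl a₀, inl_mem_padSet ha₀⟩, ?_⟩
  intro x hx y hy
  obtain ⟨a, ha, hra⟩ := base x hx
  obtain ⟨a', ha', hra'⟩ := base y hy
  exact (hra.trans (reach_inl_padSet (hs.2 a ha a' ha'))).trans hra'.symm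

lemma padSet_mem_erase_inl {s s' : Finset A} {t : Finset B} {a : A}
    (h : s' ⊆ s.erase a) : ∀ x ∈ padSet s' t, x ≠ Sum.inl a ∧ x ∈ padSet s t := by
  rintro (x | ⟨x, b⟩) hx
  · have hxs := Finset.mem_erase.1 (h (mem_padSet_inl hx))
    exact ⟨by simp [hxs.1], inl_mem_padSet hxs.2⟩
  · have hxb := mem_padSet_inr hx
    have hxs := Finset.mem_erase.1 (h hxb.1)
    exact ⟨by simp, inr_mem_padSet hxs.2 hxb.2⟩

lemma padSet_mem_erase_inr {s : Finset A} {t t' : Finset B} {a : A} {b : B}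
    (h : t' ⊆ t.erase b) : ∀ x ∈ padSet s t', x ≠ Sum.inr (a, b) ∧ x ∈ padSet s t := by
  rintro (x | ⟨x, c⟩) hx
  · exact ⟨by simp, inl_mem_padSet (mem_padSet_inl hx)⟩
  · have hxc := mem_padSet_inr hx
    have hct := Finset.mem_erase.1 (h hxc.2)
    refine ⟨?_, inr_mem_padSet hxc.1 hct.2⟩
    simp only [ne_eq, Sum.inr.injEq, Prod.mk.injEq, not_and]
    intro _ hc; exact hct.1 hc

lemma copy_mem_erase_inl {s : Finset A} {t : Finset B} {a : A} (ha : a ∈ s) :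
    ∀ x ∈ (t.image (fun b => (Sum.inr (a, b) : A ⊕ A × B))),
      x ≠ Sum.inl a ∧ x ∈ padSet s t := by
  intro x hx
  obtain ⟨b, hb, rfl⟩ := Finset.mem_image.1 hx
  exact ⟨by simp, inr_mem_padSet ha hb⟩

lemma inl_mem_erase_inr {s : Finset A} {t : Finset B} {a : A} {b : B} :
    ∀ x ∈ (s.image Sum.inl), x ≠ Sum.inr (a, b) ∧ x ∈ padSet s t := by
  intro x hx
  obtain ⟨a', ha', rfl⟩ := Finset.mem_image.1 hx
  exact ⟨by simp, inl_mem_padSet ha'⟩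

/-- The key lemma: hardness of `typeA H H'` from hardness of `H` and `H'`. -/
lemma hard_typeA (H : SimpleGraph A) (H' : SimpleGraph B) :
    ∀ (m d e : ℕ) (s : Finset A) (t : Finset B),
    d + e + t.card ≤ m → Hard H d s → Hard H' e t →
    Hard (typeA H H') (d + e + 1) (padSet s t) := by
  intro m
  induction m with
  | zero =>
    intro d e s t hm hs ht
    obtain ⟨b, hb⟩ := ht.connIn.1
    have := Finset.card_pos.2 ⟨b, hb⟩
    omega
  | succ m ih =>
    intro d e s t hm hs ht
    rw [hard_succ]
    refine ⟨connIn_padSet hs.connIn, ?_⟩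
    rintro (a | ⟨a, b⟩) hv
    · -- v = inl a
      have ha : a ∈ s := mem_padSet_inl hv
      cases d with
      | zero =>
        refine ⟨t.image (fun b => Sum.inr (a, b)),
          fun x hx => by simp only [Finset.mem_erase]; exact copy_mem_erase_inl ha x hx, ?_⟩
        have : Hard (typeA H H') e (t.image (fun b => Sum.inr (a, b))) :=
          Hard.map (G' := typeA H H') (f := fun b => (Sum.inr (a, b) : A ⊕ A × B))
            (fun b b' hbb => by simpa using hbb)
            (fun b b' hbb => ⟨rfl, hbb⟩) ht
        simpa using this
      | succ d' =>
        obtain ⟨s', hsub, hs'⟩ := hs.2 a ha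
        refine ⟨padSet s' t, fun x hx => by simp only [Finset.mem_erase]; exact padSet_mem_erase_inl hsub x hx, ?_⟩
        have := ih d' e s' t (by omega) hs' ht
        have he : d' + e + 1 = d' + 1 + e := by omega
        rwa [he] at this
    · -- v = inr (a, b)
      have hab := mem_padSet_inr hv
      cases e with
      | zero =>
        refine ⟨s.image Sum.inl, fun x hx => by simp only [Finset.mem_erase]; exact inl_mem_erase_inr x hx, ?_⟩
        have : Hard (typeA H H') d (s.image Sum.inl) :=
          Hard.map (G' := typeA H H') (f := (Sum.inl : A → A ⊕ A × B)) Sum.inl_injective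
            (fun x y hxy => hxy) hs
        simpa using this
      | succ e' =>
        obtain ⟨t', htsub, ht'⟩ := ht.2 b hab.2
        have hcard : t'.card ≤ t.card - 1 := by
          have h1 : t' ⊆ t.erase b := htsub
          have := Finset.card_le_card h1
          rw [Finset.card_erase_of_mem hab.2] at this
          exact this
        have hbpos := Finset.card_pos.2 ⟨b, hab.2⟩
        refine ⟨padSet s t', fun x hx => by simp only [Finset.mem_erase]; exact padSet_mem_erase_inr htsub x hx, ?_⟩
        have := ih d e' s t' (by omega) hs ht'
        have he : d + e' + 1 = d + (e' + 1) := by omega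
        rwa [he] at this

end TypeA

lemma grk_hard : ∀ (r k : ℕ), ∃ s : Finset (GrkS r k).1,
    Hard (GrkS r k).2 (Nat.choose (r + k + 1) (r + 1) - 1) s := by
  intro r
  induction r with
  | zero =>
    intro k
    refine ⟨(Finset.univ : Finset (Fin (k+1))), ?_⟩
    have h1 : Nat.choose (0 + k + 1) (0 + 1) - 1 = k := by
      simp [Nat.choose_one_right]
    rw [h1]
    exact hard_top k Finset.univ (by simp)
  | succ r ihr =>
    intro k
    induction k with
    | zero =>
      refine ⟨({PUnit.unit} : Finset PUnit), ?_⟩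
      have h1 : Nat.choose (r + 1 + 0 + 1) (r + 1 + 1) - 1 = 0 := by
        rw [Nat.add_zero, Nat.choose_self]
      rw [h1]
      apply hard_zero.2
      refine ⟨⟨PUnit.unit, Finset.mem_singleton_self _⟩, ?_⟩
      intro u hu v hv
      replace hu := Finset.mem_singleton.1 hu
      replace hv := Finset.mem_singleton.1 hv
      subst hu; subst hv
      exact Relation.ReflTransGen.refl
    | succ k ihk =>
      obtain ⟨sH, hH⟩ := ihr (k + 1)
      obtain ⟨sH', hH'⟩ := ihk
      have e1 : r + (k + 1) + 1 = r + k + 2 := by omega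
      have e2 : r + 1 + k + 1 = r + k + 2 := by omega
      have e3 : r + 1 + 1 = r + 2 := by omega
      have e4 : r + 1 + (k + 1) + 1 = r + k + 3 := by omega
      rw [e1] at hH
      rw [e2, e3] at hH'
      rw [e4, e3]
      refine ⟨padSet sH sH', ?_⟩
      have key := hard_typeA (GrkS r (k+1)).2 (GrkS (r+1) k).2 _ _ _ sH sH' le_rfl hH hH'
      have hnum : Nat.choose (r + k + 3) (r + 2) - 1 =
          (Nat.choose (r + k + 2) (r + 1) - 1) + (Nat.choose (r + k + 2) (r + 2) - 1) + 1 := by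
        have hp := Nat.choose_succ_succ (r + k + 2) (r + 1)
        have e5 : r + k + 2 + 1 = r + k + 3 := by omega
        simp only [Nat.succ_eq_add_one] at hp
        rw [e5, e3] at hp
        have c1 : 0 < Nat.choose (r + k + 2) (r + 1) := Nat.choose_pos (by omega)
        have c2 : 0 < Nat.choose (r + k + 2) (r + 2) := Nat.choose_pos (by omega)
        omega
      rw [hnum]
      exact key

/-- `td(G_{r,k}) ≥ C(r+k-1, r)` for all `r, k ≥ 1`; here `GrkS r k` is
`G_{r+1, k+1}`, so the bound reads `C(r+k+1, r+1)`. -/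
theorem td_Grk (r k : ℕ) :
    Nat.choose (r + k + 1) (r + 1) ≤ @td _ (GrkS r k).2 (fintypeGrk r k) := by
  obtain ⟨s, hs⟩ := grk_hard r k
  have hb := @hard_le_td _ (GrkS r k).2 (fintypeGrk r k) _ s hs
  have hpos : 0 < Nat.choose (r + k + 1) (r + 1) := Nat.choose_pos (by omega)
  omega
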